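/- arXiv:0910.4003 — 2 statements merged into one kernel-verified Lean document; each statement's English description precedes it below -/
import Mathlib

section
/- For every μ > 0 the functions τ ↦ f^μ(τ) p_c'(τ) and τ ↦ (k_a(τ)/(k_a(τ) + μ k_w(τ))) p_c'(τ) are integrable on [0,1) (the integrals being improper at τ = 1), and for every s ∈ [0,1] one has R^μ(s) + Q^μ(s) = p_c(s) − p_c(0). -/
open Set MeasureTheory

set_option maxHeartbeats 1600000 in
/-- For every μ > 0, the functions τ ↦ f^μ(τ) p_c'(τ) and
τ ↦ (k_a(τ)/(k_a(τ)+μ k_w(τ))) p_c'(τ) are integrable on [0,1), and for every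
s ∈ [0,1] one has R^μ(s) + Q^μ(s) = p_c(s) − p_c(0). -/
theorem stmt_5 (kw ka pc pc' : ℝ → ℝ)
    (hkwc : ContinuousOn kw (Icc 0 1))
    (hkwm : MonotoneOn kw (Icc 0 1))
    (hkw0 : kw 0 = 0) (hkw1 : kw 1 = 1)
    (hkac : ContinuousOn ka (Icc 0 1))
    (hkaa : AntitoneOn ka (Icc 0 1))
    (hka0 : ka 0 = 1) (hka1 : ka 1 = 0)
    (hkapos : ∀ s ∈ Ico (0:ℝ) 1, 0 < ka s)
    (hpcc : ContinuousOn pc (Icc 0 1))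
    (hpcd : ∀ s ∈ Ico (0:ℝ) 1, HasDerivWithinAt pc (pc' s) (Icc 0 1) s)
    (hpc'c : ContinuousOn pc' (Ico 0 1))
    (hpc'neg : ∀ s ∈ Ico (0:ℝ) 1, pc' s < 0)
    (μ : ℝ) (hμ : 0 < μ) :
    IntervalIntegrable (fun τ => (kw τ / (kw τ + (1/μ) * ka τ)) * pc' τ) volume 0 1 ∧
    IntervalIntegrable (fun τ => (ka τ / (ka τ + μ * kw τ)) * pc' τ) volume 0 1 ∧
    ∀ s ∈ Icc (0:ℝ) 1,
      (∫ τ in (0:ℝ)..s, (ka τ / (ka τ + μ * kw τ)) * pc' τ) +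
      (∫ τ in (0:ℝ)..s, (kw τ / (kw τ + (1/μ) * ka τ)) * pc' τ) = pc s - pc 0 := by
  -- basic positivity facts
  have hkwnn : ∀ τ ∈ Icc (0:ℝ) 1, 0 ≤ kw τ := by
    intro τ hτ
    have := hkwm (left_mem_Icc.2 zero_le_one) hτ hτ.1
    rwa [hkw0] at this
  have hkann : ∀ τ ∈ Icc (0:ℝ) 1, 0 ≤ ka τ := by
    intro τ hτ
    rcases eq_or_lt_of_le hτ.2 with h | h
    · rw [h, hka1]
    · exact (hkapos τ ⟨hτ.1, h⟩).le
  have hden2 : ∀ τ ∈ Icc (0:ℝ) 1, 0 < ka τ + μ * kw τ := by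
    intro τ hτ
    rcases eq_or_lt_of_le hτ.2 with h | h
    · rw [h, hka1, hkw1]; linarith
    · have := hkapos τ ⟨hτ.1, h⟩
      have := hkwnn τ hτ
      nlinarith
  have hden1 : ∀ τ ∈ Icc (0:ℝ) 1, 0 < kw τ + (1/μ) * ka τ := by
    intro τ hτ
    have h2 := hden2 τ hτ
    have : kw τ + (1/μ) * ka τ = (1/μ) * (ka τ + μ * kw τ) := by
      field_simp; ring
    rw [this]
    positivity
  -- the two weights are in [0,1] and sum to 1
  have hg1 : ∀ τ ∈ Icc (0:ℝ) 1, kw τ / (kw τ + (1/μ) * ka τ) ∈ Icc (0:ℝ) 1 := by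
    intro τ hτ
    constructor
    · exact div_nonneg (hkwnn τ hτ) (hden1 τ hτ).le
    · rw [div_le_one (hden1 τ hτ)]
      have := hkann τ hτ
      nlinarith [one_div_pos.2 hμ]
  have hg2 : ∀ τ ∈ Icc (0:ℝ) 1, ka τ / (ka τ + μ * kw τ) ∈ Icc (0:ℝ) 1 := by
    intro τ hτ
    constructor
    · exact div_nonneg (hkann τ hτ) (hden2 τ hτ).le
    · rw [div_le_one (hden2 τ hτ)]
      have := hkwnn τ hτ
      nlinarith
  have hsum : ∀ τ ∈ Icc (0:ℝ) 1,
      ka τ / (ka τ + μ * kw τ) + kw τ / (kw τ + (1/μ) * ka τ) = 1 := by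
    intro τ hτ
    have h2 := hden2 τ hτ
    have hkey : kw τ + (1/μ) * ka τ = (ka τ + μ * kw τ) / μ := by
      field_simp
      ring
    rw [hkey, div_div_eq_mul_div]
    rw [← add_div]
    rw [div_eq_one_iff_eq h2.ne']
    ring
  -- pc' is interval integrable on [0,1]
  have hpc'int : IntervalIntegrable pc' volume 0 1 := by
    rw [intervalIntegrable_iff_integrableOn_Ioc_of_le zero_le_one]
    have h : IntegrableOn (fun τ => -pc' τ) (Ioc (0:ℝ) 1) volume := by
      apply intervalIntegral.integrableOn_deriv_of_nonneg (g := fun τ => -pc τ) hpcc.neg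
      · intro x hx
        have hx' : x ∈ Ico (0:ℝ) 1 := ⟨hx.1.le, hx.2⟩
        have hd : HasDerivAt pc (pc' x) x :=
          (hpcd x hx').hasDerivAt (Icc_mem_nhds hx.1 hx.2)
        exact hd.neg
      · intro x hx
        exact (neg_nonneg.2 (hpc'neg x ⟨hx.1.le, hx.2⟩).le)
    exact h.neg.congr (ae_of_all _ fun x => by simp)
  -- measurability helpers
  have hkwm' : AEStronglyMeasurable kw (volume.restrict (Ioc (0:ℝ) 1)) :=
    (hkwc.mono Ioc_subset_Icc_self).aestronglyMeasurable measurableSet_Ioc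
  have hkam' : AEStronglyMeasurable ka (volume.restrict (Ioc (0:ℝ) 1)) :=
    (hkac.mono Ioc_subset_Icc_self).aestronglyMeasurable measurableSet_Ioc
  have hpc'm : AEStronglyMeasurable pc' (volume.restrict (Ioc (0:ℝ) 1)) :=
    (hpc'int.1).aestronglyMeasurable
  -- integrability of the two weighted integrands
  have key : ∀ g : ℝ → ℝ, AEStronglyMeasurable g (volume.restrict (Ioc (0:ℝ) 1)) →
      (∀ τ ∈ Icc (0:ℝ) 1, g τ ∈ Icc (0:ℝ) 1) →
      IntervalIntegrable (fun τ => g τ * pc' τ) volume 0 1 := by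
    intro g hgm hgb
    rw [intervalIntegrable_iff_integrableOn_Ioc_of_le zero_le_one]
    have hint : IntegrableOn pc' (Ioc (0:ℝ) 1) volume := hpc'int.1
    have hgm2 : AEStronglyMeasurable (fun τ => g τ * pc' τ)
        (volume.restrict (Ioc (0:ℝ) 1)) := hgm.mul hpc'm
    apply Integrable.mono' hint.norm hgm2
    filter_upwards [ae_restrict_mem measurableSet_Ioc] with τ hτ
    have hτ' : τ ∈ Icc (0:ℝ) 1 := Ioc_subset_Icc_self hτ
    have h := hgb τ hτ'
    rw [norm_mul, Real.norm_eq_abs (g τ), abs_of_nonneg h.1]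
    calc g τ * ‖pc' τ‖ ≤ 1 * ‖pc' τ‖ :=
          mul_le_mul_of_nonneg_right h.2 (norm_nonneg _)
      _ = ‖pc' τ‖ := one_mul _
  have c1 : ContinuousOn (fun τ => kw τ / (kw τ + (1/μ) * ka τ)) (Icc (0:ℝ) 1) :=
    hkwc.div (hkwc.add (continuousOn_const.mul hkac)) (fun τ hτ => (hden1 τ hτ).ne')
  have m1 : AEStronglyMeasurable (fun τ => kw τ / (kw τ + (1/μ) * ka τ))
      (volume.restrict (Ioc (0:ℝ) 1)) :=
    (c1.mono Ioc_subset_Icc_self).aestronglyMeasurable measurableSet_Ioc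
  have h1int : IntervalIntegrable (fun τ => (kw τ / (kw τ + (1/μ) * ka τ)) * pc' τ) volume 0 1 :=
    key _ m1 hg1
  have c2 : ContinuousOn (fun τ => ka τ / (ka τ + μ * kw τ)) (Icc (0:ℝ) 1) :=
    hkac.div (hkac.add (continuousOn_const.mul hkwc)) (fun τ hτ => (hden2 τ hτ).ne')
  have m2 : AEStronglyMeasurable (fun τ => ka τ / (ka τ + μ * kw τ))
      (volume.restrict (Ioc (0:ℝ) 1)) :=
    (c2.mono Ioc_subset_Icc_self).aestronglyMeasurable measurableSet_Ioc
  have h2int : IntervalIntegrable (fun τ => (ka τ / (ka τ + μ * kw τ)) * pc' τ) volume 0 1 :=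
    key _ m2 hg2
  refine ⟨h1int, h2int, ?_⟩
  intro s hs
  have hsub : uIcc 0 s ⊆ uIcc (0:ℝ) 1 := by
    rw [uIcc_of_le hs.1, uIcc_of_le zero_le_one]
    exact Icc_subset_Icc le_rfl hs.2
  have hftc : (∫ τ in (0:ℝ)..s, pc' τ) = pc s - pc 0 := by
    apply intervalIntegral.integral_eq_sub_of_hasDeriv_right_of_le hs.1
      (hpcc.mono (Icc_subset_Icc le_rfl hs.2))
    · intro x hx
      have hx' : x ∈ Ico (0:ℝ) 1 := ⟨hx.1.le, lt_of_lt_of_le hx.2 hs.2⟩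
      have hd : HasDerivAt pc (pc' x) x :=
        (hpcd x hx').hasDerivAt (Icc_mem_nhds hx.1 hx'.2)
      exact hd.hasDerivWithinAt
    · exact hpc'int.mono_set hsub
  rw [← intervalIntegral.integral_add (h2int.mono_set hsub) (h1int.mono_set hsub), ← hftc]
  apply intervalIntegral.integral_congr
  intro τ hτ
  rw [uIcc_of_le hs.1] at hτ
  have := hsum τ ⟨hτ.1, hτ.2.trans hs.2⟩
  simpa [add_mul] using congrArg (fun r => r * pc' τ) this
end

section
/- The function τ ↦ √(k_a(τ)) |p_c'(τ)| is integrable on [0,1) (the integral being improper at τ = 1), so ζ is well defined on [0,1]; moreover ζ is nonincreasing and |ζ(s)| ≤ √(C_g · (p_c(0) − p_c(1))) for every s ∈ [0,1]. -/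
open Set MeasureTheory

/-- AM–GM: `√(x*y) ≤ (x+y)/2` for nonnegative `x, y`. -/
lemma sqrt_mul_le_half_add (x y : ℝ) (hx : 0 ≤ x) (hy : 0 ≤ y) :
    Real.sqrt (x * y) ≤ (x + y) / 2 := by
  have h1 : x * y ≤ ((x + y) / 2) ^ 2 := by nlinarith [sq_nonneg (x - y)]
  calc Real.sqrt (x * y) ≤ Real.sqrt (((x + y) / 2) ^ 2) := Real.sqrt_le_sqrt h1
    _ = (x + y) / 2 := Real.sqrt_sq (by positivity)

/-- If `X ≤ (l*A + B/l)/2` for every `l > 0`, with `A > 0` and `B ≥ 0`,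
then `X ≤ √(A*B)`. -/
lemma le_sqrt_of_forall_le (X A B : ℝ) (hA : 0 < A) (hB : 0 ≤ B)
    (h : ∀ l : ℝ, 0 < l → X ≤ (l * A + B / l) / 2) : X ≤ Real.sqrt (A * B) := by
  rcases eq_or_lt_of_le hB with hB0 | hBpos
  · -- B = 0
    rw [← hB0, mul_zero, Real.sqrt_zero]
    by_contra hX
    push_neg at hX
    have hl : 0 < X / A := div_pos hX hA
    have := h (X / A) hl
    rw [← hB0] at this
    have hXA : X / A * A = X := div_mul_cancel₀ X hA.ne'
    rw [hXA] at this
    simp only [zero_div] at this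
    linarith
  · set l := Real.sqrt (B / A) with hl_def
    have hl : 0 < l := Real.sqrt_pos.2 (div_pos hBpos hA)
    have hlA : l * A = Real.sqrt (A * B) := by
      have : l * A = Real.sqrt (B / A) * Real.sqrt (A ^ 2) := by
        rw [Real.sqrt_sq hA.le]
      rw [this, ← Real.sqrt_mul (by positivity)]
      congr 1
      field_simp
    have hBl : B / l = Real.sqrt (A * B) := by
      rw [div_eq_iff hl.ne', hl_def, ← Real.sqrt_mul (by positivity : (0:ℝ) ≤ A * B),
        show A * B * (B / A) = B ^ 2 by field_simp]
      exact (Real.sqrt_sq hB).symm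
    have := h l hl
    rw [hlA, hBl] at this
    linarith

/-- τ ↦ √(k_a(τ)) |p_c'(τ)| is integrable on [0,1), so
ζ(s) = ∫₀ˢ √(k_a(τ)) p_c'(τ) dτ is well defined on [0,1]; moreover ζ is
nonincreasing and |ζ(s)| ≤ √(C_g (p_c(0) − p_c(1))) for every s ∈ [0,1]. -/
theorem stmt_10 (ka pc pc' : ℝ → ℝ) (Cg : ℝ)
    (hkac : ContinuousOn ka (Icc 0 1))
    (hkaa : AntitoneOn ka (Icc 0 1))
    (hka0 : ka 0 = 1) (hka1 : ka 1 = 0)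
    (hkapos : ∀ s ∈ Ico (0:ℝ) 1, 0 < ka s)
    (hpcc : ContinuousOn pc (Icc 0 1))
    (hpcd : ∀ s ∈ Ico (0:ℝ) 1, HasDerivWithinAt pc (pc' s) (Icc 0 1) s)
    (hpc'c : ContinuousOn pc' (Ico 0 1))
    (hpc'neg : ∀ s ∈ Ico (0:ℝ) 1, pc' s < 0)
    (hCg : IsLUB ((fun s => -(ka s * pc' s)) '' Ico 0 1) Cg) :
    IntervalIntegrable (fun τ => Real.sqrt (ka τ) * |pc' τ|) volume 0 1 ∧
    AntitoneOn (fun s => ∫ τ in (0:ℝ)..s, Real.sqrt (ka τ) * pc' τ) (Icc 0 1) ∧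
    ∀ s ∈ Icc (0:ℝ) 1,
      |∫ τ in (0:ℝ)..s, Real.sqrt (ka τ) * pc' τ|
        ≤ Real.sqrt (Cg * (pc 0 - pc 1)) := by
  set f : ℝ → ℝ := fun τ => Real.sqrt (ka τ) * |pc' τ| with hf_def
  set g : ℝ → ℝ := fun τ => Real.sqrt (ka τ) * pc' τ with hg_def
  -- derivative at interior points
  have hpcd' : ∀ x ∈ Ioo (0:ℝ) 1, HasDerivAt pc (pc' x) x := by
    intro x hx
    exact (hpcd x ⟨hx.1.le, hx.2⟩).hasDerivAt (Icc_mem_nhds hx.1 hx.2)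
  -- `-pc'` is integrable on `Ioc 0 1` (improper at 1)
  have hint1 : IntegrableOn (fun τ => -pc' τ) (Ioc (0:ℝ) 1) volume := by
    apply intervalIntegral.integrableOn_deriv_of_nonneg (g := fun x => -pc x) hpcc.neg
    · intro x hx; exact (hpcd' x hx).neg
    · intro x hx; have := hpc'neg x ⟨hx.1.le, hx.2⟩; linarith
  have hint1' : IntegrableOn (fun τ => -pc' τ) (Ioo (0:ℝ) 1) volume :=
    hint1.mono_set Ioo_subset_Ioc_self
  -- Cg facts
  have hCgge : ∀ τ ∈ Ico (0:ℝ) 1, ka τ * (-pc' τ) ≤ Cg := by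
    intro τ hτ
    rw [mul_neg]
    exact hCg.1 ⟨τ, hτ, rfl⟩
  have hCgpos : 0 < Cg := by
    have h0 : (0:ℝ) ∈ Ico (0:ℝ) 1 := ⟨le_refl _, zero_lt_one⟩
    have := hCg.1 ⟨0, h0, rfl⟩
    have hneg := hpc'neg 0 h0
    simp only [hka0, one_mul] at this
    linarith
  -- pointwise bound with parameter l
  have hptwise : ∀ l : ℝ, 0 < l → ∀ τ ∈ Ico (0:ℝ) 1,
      f τ ≤ (l * Cg + (-pc' τ) / l) / 2 := by
    intro l hl τ hτ
    set b := -pc' τ with hb_def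
    have hbpos : 0 < b := by have := hpc'neg τ hτ; simp [hb_def]; linarith
    have habs : |pc' τ| = b := by rw [abs_of_neg (hpc'neg τ hτ)]
    have hkapos' := hkapos τ hτ
    have h1 : f τ = Real.sqrt (ka τ * b * b) := by
      simp only [hf_def, habs]
      rw [mul_assoc, Real.sqrt_mul hkapos'.le, Real.sqrt_mul_self hbpos.le]
    have h2 : Real.sqrt (ka τ * b * b) ≤ Real.sqrt (Cg * b) :=
      Real.sqrt_le_sqrt (mul_le_mul_of_nonneg_right (hCgge τ hτ) hbpos.le)
    have h3 : Cg * b = (l * Cg) * (b / l) := by field_simp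
    have h4 : Real.sqrt ((l * Cg) * (b / l)) ≤ ((l * Cg) + b / l) / 2 :=
      sqrt_mul_le_half_add _ _ (by positivity) (by positivity)
    rw [← h3] at h4
    rw [h1]
    exact h2.trans h4
  -- integrability of f on Ioo 0 1
  have hfmeas : AEStronglyMeasurable f (volume.restrict (Ioo (0:ℝ) 1)) := by
    apply ContinuousOn.aestronglyMeasurable _ measurableSet_Ioo
    apply ContinuousOn.mul
    · exact Real.continuous_sqrt.comp_continuousOn
        (hkac.mono (Ioo_subset_Icc_self))
    · exact (hpc'c.mono (fun x hx => ⟨hx.1.le, hx.2⟩)).abs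
  have hfint' : IntegrableOn f (Ioo (0:ℝ) 1) volume := by
    apply Integrable.mono' (g := fun τ => (1 * Cg + (-pc' τ) / 1) / 2)
    · apply Integrable.div_const
      apply Integrable.add (integrableOn_const (by simp) enorm_ne_top)
      simpa [IntegrableOn] using hint1'
    · exact hfmeas
    · filter_upwards [ae_restrict_mem measurableSet_Ioo] with τ hτ
      have hnn : 0 ≤ f τ := by positivity
      rw [Real.norm_of_nonneg hnn]
      exact hptwise 1 one_pos τ ⟨hτ.1.le, hτ.2⟩
  have hfint : IntegrableOn f (Ioc (0:ℝ) 1) volume :=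
    (integrableOn_Ioc_iff_integrableOn_Ioo).2 hfint'
  have hfII : IntervalIntegrable f volume 0 1 :=
    (intervalIntegrable_iff_integrableOn_Ioc_of_le (by norm_num)).2 hfint
  -- integrability of g
  have hgint' : IntegrableOn g (Ioo (0:ℝ) 1) volume := by
    apply IntegrableOn.congr_fun (hfint'.neg) _ measurableSet_Ioo
    intro τ hτ
    have := hpc'neg τ ⟨hτ.1.le, hτ.2⟩
    simp only [hg_def, hf_def, Pi.neg_apply]
    rw [abs_of_neg this]; ring
  have hgint : IntegrableOn g (Ioc (0:ℝ) 1) volume :=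
    (integrableOn_Ioc_iff_integrableOn_Ioo).2 hgint'
  have hgII : IntervalIntegrable g volume 0 1 :=
    (intervalIntegrable_iff_integrableOn_Ioc_of_le (by norm_num)).2 hgint
  -- g is nonpositive on Icc 0 1
  have hgnp : ∀ τ ∈ Icc (0:ℝ) 1, g τ ≤ 0 := by
    intro τ hτ
    rcases eq_or_lt_of_le hτ.2 with h1 | h1
    · simp [hg_def, h1, hka1]
    · exact mul_nonpos_of_nonneg_of_nonpos (Real.sqrt_nonneg _)
        (hpc'neg τ ⟨hτ.1, h1⟩).le
  refine ⟨hfII, ?_, ?_⟩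
  · -- Antitone
    intro s hs t ht hst
    have hgs : IntervalIntegrable g volume 0 s := by
      apply hgII.mono_set
      rw [uIcc_of_le hs.1, uIcc_of_le (by norm_num : (0:ℝ) ≤ 1)]
      exact Icc_subset_Icc le_rfl hs.2
    have hgst : IntervalIntegrable g volume s t := by
      apply hgII.mono_set
      rw [uIcc_of_le hst, uIcc_of_le (by norm_num : (0:ℝ) ≤ 1)]
      exact Icc_subset_Icc hs.1 ht.2
    have hadd := intervalIntegral.integral_add_adjacent_intervals hgs hgst
    have hnp : (∫ τ in s..t, g τ) ≤ 0 := by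
      have : 0 ≤ ∫ τ in s..t, -g τ := by
        apply intervalIntegral.integral_nonneg hst
        intro u hu
        have := hgnp u ⟨hs.1.trans hu.1, hu.2.trans ht.2⟩
        linarith
      rw [intervalIntegral.integral_neg] at this
      linarith
    show (∫ τ in (0:ℝ)..t, g τ) ≤ ∫ τ in (0:ℝ)..s, g τ
    linarith [hadd]
  · -- bound
    intro s hs
    -- FTC: ∫ in Ioo 0 1, -pc' = pc 0 - pc 1
    have hFTC : (∫ τ in Ioo (0:ℝ) 1, -pc' τ) = pc 0 - pc 1 := by
      have := intervalIntegral.integral_eq_sub_of_hasDeriv_right_of_le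
        (f := fun x => -pc x) (f' := fun x => -pc' x) (by norm_num : (0:ℝ) ≤ 1)
        hpcc.neg (fun x hx => ((hpcd' x hx).neg).hasDerivWithinAt)
        ((intervalIntegrable_iff_integrableOn_Ioc_of_le (by norm_num)).2 hint1)
      rw [intervalIntegral.integral_of_le (by norm_num),
        integral_Ioc_eq_integral_Ioo] at this
      rw [this]; ring
    have hBnn : 0 ≤ pc 0 - pc 1 := by
      rw [← hFTC]
      apply setIntegral_nonneg measurableSet_Ioo
      intro τ hτ
      have := hpc'neg τ ⟨hτ.1.le, hτ.2⟩
      linarith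
    -- |ζ s| ≤ ∫₀ˢ f
    have habs : |∫ τ in (0:ℝ)..s, g τ| ≤ ∫ τ in (0:ℝ)..s, f τ := by
      refine (intervalIntegral.abs_integral_le_integral_abs hs.1).trans_eq ?_
      apply intervalIntegral.integral_congr
      intro τ _
      simp only [hf_def, hg_def, abs_mul, abs_of_nonneg (Real.sqrt_nonneg _)]
    have hIoos : Ioo (0:ℝ) s ⊆ Ioo (0:ℝ) 1 := Ioo_subset_Ioo le_rfl hs.2
    have hIcos : Ioo (0:ℝ) s ⊆ Ico (0:ℝ) 1 := fun x hx => ⟨hx.1.le, hx.2.trans_le hs.2⟩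
    -- ∫₀ˢ f ≤ (l*Cg + (pc 0 - pc 1)/l)/2 for every l > 0
    have hkey : ∀ l : ℝ, 0 < l →
        (∫ τ in (0:ℝ)..s, f τ) ≤ (l * Cg + (pc 0 - pc 1) / l) / 2 := by
      intro l hl
      rw [intervalIntegral.integral_of_le hs.1, integral_Ioc_eq_integral_Ioo]
      have hhint : IntegrableOn (fun τ => (l * Cg + (-pc' τ) / l) / 2)
          (Ioo (0:ℝ) s) volume := by
        apply Integrable.div_const
        apply Integrable.add (integrableOn_const (by simp) enorm_ne_top)
        exact (hint1'.mono_set hIoos).div_const l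
      have step1 : (∫ τ in Ioo (0:ℝ) s, f τ)
          ≤ ∫ τ in Ioo (0:ℝ) s, (l * Cg + (-pc' τ) / l) / 2 := by
        apply setIntegral_mono_on (hfint'.mono_set hIoos) hhint measurableSet_Ioo
        intro τ hτ
        exact hptwise l hl τ (hIcos hτ)
      have step2 : (∫ τ in Ioo (0:ℝ) s, (l * Cg + (-pc' τ) / l) / 2)
          = ((l * Cg) * (volume (Ioo (0:ℝ) s)).toReal
            + (∫ τ in Ioo (0:ℝ) s, -pc' τ) / l) / 2 := by
        rw [integral_div, integral_add (show IntegrableOn (fun _ => l * Cg) (Ioo (0:ℝ) s) volume from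
            integrableOn_const (by simp) enorm_ne_top)
          ((hint1'.mono_set hIoos).div_const l)]
        rw [setIntegral_const, integral_div]
        rw [smul_eq_mul, mul_comm]
        rfl
      have hvol : (volume (Ioo (0:ℝ) s)).toReal ≤ 1 := by
        rw [Real.volume_Ioo, ENNReal.toReal_ofReal_eq_iff.2]
        · linarith [hs.2]
        · linarith [hs.1]
      have hmono : (∫ τ in Ioo (0:ℝ) s, -pc' τ) ≤ pc 0 - pc 1 := by
        rw [← hFTC]
        apply setIntegral_mono_set hint1'
        · filter_upwards [ae_restrict_mem measurableSet_Ioo] with τ hτ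
          have := hpc'neg τ ⟨hτ.1.le, hτ.2⟩; simp; linarith
        · exact hIoos.eventuallyLE
      have hvolnn : 0 ≤ (volume (Ioo (0:ℝ) s)).toReal := ENNReal.toReal_nonneg
      calc (∫ τ in Ioo (0:ℝ) s, f τ)
          ≤ ((l * Cg) * (volume (Ioo (0:ℝ) s)).toReal
            + (∫ τ in Ioo (0:ℝ) s, -pc' τ) / l) / 2 := step1.trans_eq step2
        _ ≤ (l * Cg + (pc 0 - pc 1) / l) / 2 := by
            have h1 : (l * Cg) * (volume (Ioo (0:ℝ) s)).toReal ≤ l * Cg * 1 :=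
              mul_le_mul_of_nonneg_left hvol (by positivity)
            have h2 : (∫ τ in Ioo (0:ℝ) s, -pc' τ) / l ≤ (pc 0 - pc 1) / l := by
              gcongr
            linarith
      done
    have := le_sqrt_of_forall_le (∫ τ in (0:ℝ)..s, f τ) Cg (pc 0 - pc 1)
      hCgpos hBnn hkey
    exact habs.trans this
end
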